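/- Let α ∈ (ℂ₋ ∪ ℝ)^N (each Im α_j ≤ 0), let Y ⊂ ℝ³ consist of N distinct points, and let z = i t with t > 0. Then the matrix i·Γ_{α,Y}(it) is accretive: for every vector u ∈ ℂ^N, Re ⟨ i Γ_{α,Y}(it) u, u ⟩ ≥ 0, where ⟨·,·⟩ is the standard inner product on ℂ^N. -/

import Mathlib

open Complex Real
open scoped Classical

/-- The regularized free Green function `G̃_z(x) = e^{iz|x|}/(4π|x|)` for `x ≠ 0`,
`G̃_z(0) = 0`. -/
noncomputable def Gt (z : ℂ) (x : EuclideanSpace ℝ (Fin 3)) : ℂ :=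
  if x = 0 then 0 else Complex.exp (Complex.I * z * ‖x‖) / (4 * Real.pi * ‖x‖)

/-- The matrix `Γ_{α,Y}(z)` with entries
`(α_j − i z/(4π)) δ_{jj'} − G̃_z(y_j − y_{j'})`. -/
noncomputable def GammaM (N : ℕ) (y : Fin N → EuclideanSpace ℝ (Fin 3))
    (α : Fin N → ℂ) (z : ℂ) : Matrix (Fin N) (Fin N) ℂ :=
  Matrix.of fun j j' =>
    (if j = j' then α j - Complex.I * z / (4 * Real.pi) else 0) - Gt z (y j - y j')

lemma Gt_real (t : ℝ) (x : EuclideanSpace ℝ (Fin 3)) :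
    Gt (Complex.I * t) x =
      ((if x = 0 then 0 else Real.exp (-t * ‖x‖) / (4 * Real.pi * ‖x‖) : ℝ) : ℂ) := by
  unfold Gt
  by_cases hx : x = 0
  · simp [hx]
  · simp only [hx, if_false]
    have h1 : Complex.I * (Complex.I * t) * ‖x‖ = ((-t * ‖x‖ : ℝ) : ℂ) := by
      rw [← mul_assoc, Complex.I_mul_I]; push_cast; ring
    rw [h1, ← Complex.ofReal_exp]
    push_cast
    ring

/-- for dissipative strength parameters (`Im αⱼ ≤ 0`) and `z = it`
with `t > 0`, the matrix `i Γ_{α,Y}(it)` is accretive: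
`Re ⟨ i Γ_{α,Y}(it) u, u ⟩ ≥ 0` for all `u ∈ ℂ^N`. -/
theorem stmt5 (N : ℕ) (y : Fin N → EuclideanSpace ℝ (Fin 3))
    (hy : Function.Injective y) (α : Fin N → ℂ)
    (hα : ∀ j, (α j).im ≤ 0) (t : ℝ) (ht : 0 < t) (u : Fin N → ℂ) :
    0 ≤ (∑ j, (starRingEnd ℂ)
        ((Complex.I • (GammaM N y α (Complex.I * t)).mulVec u) j) * u j).re := by
  set Γ : Matrix (Fin N) (Fin N) ℂ := GammaM N y α (Complex.I * t) with hΓdef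
  set g : Fin N → Fin N → ℝ := fun j k =>
    if y j - y k = 0 then 0 else Real.exp (-t * ‖y j - y k‖) / (4 * Real.pi * ‖y j - y k‖)
    with hgdef
  have hgsym : ∀ j k, g j k = g k j := by
    intro j k
    simp only [hgdef]
    rw [norm_sub_rev]
    congr 1
    simp [sub_eq_zero, eq_comm]
  have hΓ : ∀ j k, Γ j k =
      (if j = k then α j + ((t / (4 * Real.pi) : ℝ) : ℂ) else 0) - ((g j k : ℝ) : ℂ) := by
    intro j k
    show (if j = k then α j - Complex.I * (Complex.I * t) / (4 * Real.pi) else 0)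
        - Gt (Complex.I * t) (y j - y k) = _
    rw [Gt_real]
    congr 1
    by_cases h : j = k
    · simp only [h, if_true]
      rw [← mul_assoc, Complex.I_mul_I]
      push_cast
      ring
    · simp [h]
  -- step 1 : rewrite each term of the outer sum
  have e1 : ∀ j, ((starRingEnd ℂ) ((Complex.I • Γ.mulVec u) j) * u j).re
      = ∑ k, ((starRingEnd ℂ) (Γ j k) * (starRingEnd ℂ) (u k) * u j).im := by
    intro j
    have hv : (Complex.I • Γ.mulVec u) j = Complex.I * ∑ k, Γ j k * u k := by
      simp [Matrix.mulVec, dotProduct]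
    have e2 : (starRingEnd ℂ) ((Complex.I • Γ.mulVec u) j) * u j
        = -(Complex.I * ∑ k, (starRingEnd ℂ) (Γ j k) * (starRingEnd ℂ) (u k) * u j) := by
      rw [hv, map_mul, map_sum, Complex.conj_I]
      simp only [map_mul]
      conv_rhs => rw [← Finset.sum_mul]
      ring
    rw [e2, Complex.neg_re, ← Complex.im_sum]
    simp [Complex.mul_re]
  have hterm : ∀ j k, ((starRingEnd ℂ) (Γ j k) * (starRingEnd ℂ) (u k) * u j).im
      = (if j = k then (-(α j).im) * Complex.normSq (u j) else 0)
        - g j k * ((starRingEnd ℂ) (u k) * u j).im := by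
    intro j k
    rw [hΓ j k]
    by_cases h : j = k
    · subst h
      simp only [if_true]
      obtain ⟨r, hr⟩ : ∃ r : ℝ, ((t / (4 * Real.pi) : ℝ) : ℂ) = (r : ℂ) := ⟨_, rfl⟩
      rw [hr]
      simp [Complex.mul_im, Complex.mul_re, Complex.normSq_apply]
      ring
    · simp only [h, if_false]
      simp [Complex.mul_im, Complex.mul_re]
      ring
  have hS : (∑ j, ∑ k, g j k * ((starRingEnd ℂ) (u k) * u j).im) = 0 := by
    have hanti : ∀ j k, g j k * ((starRingEnd ℂ) (u k) * u j).im
        = -(g k j * ((starRingEnd ℂ) (u j) * u k).im) := by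
      intro j k
      rw [hgsym j k]
      have : ((starRingEnd ℂ) (u k) * u j).im = -((starRingEnd ℂ) (u j) * u k).im := by
        simp [Complex.mul_im]
        ring
      rw [this]
      ring
    have h1 : (∑ j, ∑ k, g j k * ((starRingEnd ℂ) (u k) * u j).im)
        = -(∑ j, ∑ k, g j k * ((starRingEnd ℂ) (u k) * u j).im) := by
      conv_lhs => rw [Finset.sum_comm]
      calc (∑ k, ∑ j, g j k * ((starRingEnd ℂ) (u k) * u j).im)
          = ∑ k, ∑ j, -(g k j * ((starRingEnd ℂ) (u j) * u k).im) :=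
            Finset.sum_congr rfl fun k _ => Finset.sum_congr rfl fun j _ => hanti j k
        _ = -(∑ k, ∑ j, g k j * ((starRingEnd ℂ) (u j) * u k).im) := by
            simp [Finset.sum_neg_distrib]
        _ = _ := rfl
    linarith
  have main : (∑ j, (starRingEnd ℂ) ((Complex.I • Γ.mulVec u) j) * u j).re
      = ∑ j, (-(α j).im) * Complex.normSq (u j) := by
    calc (∑ j, (starRingEnd ℂ) ((Complex.I • Γ.mulVec u) j) * u j).re
        = ∑ j, ∑ k, ((starRingEnd ℂ) (Γ j k) * (starRingEnd ℂ) (u k) * u j).im := by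
          rw [Complex.re_sum]
          exact Finset.sum_congr rfl fun j _ => e1 j
      _ = ∑ j, ∑ k, ((if j = k then (-(α j).im) * Complex.normSq (u j) else 0)
            - g j k * ((starRingEnd ℂ) (u k) * u j).im) :=
          Finset.sum_congr rfl fun j _ => Finset.sum_congr rfl fun k _ => hterm j k
      _ = (∑ j, ∑ k, (if j = k then (-(α j).im) * Complex.normSq (u j) else 0))
            - ∑ j, ∑ k, g j k * ((starRingEnd ℂ) (u k) * u j).im := by
          rw [← Finset.sum_sub_distrib]
          exact Finset.sum_congr rfl fun j _ => Finset.sum_sub_distrib _ _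
      _ = ∑ j, (-(α j).im) * Complex.normSq (u j) := by
          rw [hS, sub_zero]
          exact Finset.sum_congr rfl fun j _ => by simp
  rw [main]
  apply Finset.sum_nonneg
  intro j _
  have := hα j
  have h2 := Complex.normSq_nonneg (u j)
  nlinarith
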